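/- For integers a ≥ b ≥ 0 and a real number q ≥ 2, the Gaussian binomial coefficient satisfies q^(b(a-b)) ≤ [a choose b]_q ≤ (1 + 5/q) · q^(b(a-b)). -/

import Mathlib

/-- The Gaussian binomial coefficient for a real parameter `q` and naturals `a ≥ b`:
`[a choose b]_q = ∏_{i=0}^{b-1} (q^(a-i) - 1)/(q^(b-i) - 1)`. -/
noncomputable def gaussBinom (q : ℝ) (a b : ℕ) : ℝ :=
  ∏ i ∈ Finset.range b, (q ^ (a - i) - 1) / (q ^ (b - i) - 1)

lemma aux_strong (q : ℝ) (hq : 2 ≤ q) : ∀ b, 3 ≤ b →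
    q / (q + 5) * (1 + (8/7) * (q ^ b)⁻¹) ≤
      ∏ j ∈ Finset.range b, (1 - (q ^ (j + 1))⁻¹) := by
  have hq0 : (0:ℝ) < q := by linarith
  intro b hb
  induction b, hb using Nat.le_induction with
  | base =>
      norm_num [Finset.prod_range_succ, Finset.prod_range_one]
      have h1 : (0:ℝ) < q + 5 := by linarith
      have hq2 : (0:ℝ) < q ^ 2 := by positivity
      have hq3 : (0:ℝ) < q ^ 3 := by positivity
      have hs : (0:ℝ) ≤ q - 2 := by linarith
      rw [div_mul_eq_mul_div, div_le_iff₀ h1]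
      field_simp
      nlinarith [pow_nonneg hs 2, pow_nonneg hs 3, pow_nonneg hs 4, pow_nonneg hs 5,
        pow_nonneg hs 6, pow_nonneg hs 7, pow_nonneg hs 8, pow_nonneg hs 9, hs]
  | succ b hb ih =>
      rw [Finset.prod_range_succ]
      have h8 : (8:ℝ) ≤ q ^ b := by
        calc (8:ℝ) = 2 ^ 3 := by norm_num
        _ ≤ q ^ 3 := by gcongr
        _ ≤ q ^ b := pow_le_pow_right₀ (by linarith) hb
      have htb : (q ^ b)⁻¹ ≤ 1/8 := by
        have := inv_anti₀ (show (0:ℝ) < 8 by norm_num) h8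
        simpa using this
      have ht : (q ^ (b+1))⁻¹ ≤ (q ^ b)⁻¹ := by
        apply inv_anti₀ (by positivity)
        exact pow_le_pow_right₀ (by linarith) (Nat.le_succ b)
      have hpos : (0:ℝ) < 1 - (q ^ (b+1))⁻¹ := by
        have : (q ^ (b+1))⁻¹ ≤ 1/8 := le_trans ht htb
        linarith
      have hM : (0:ℝ) < q / (q+5) := by positivity
      have key : q / (q + 5) * (1 + 8/7 * (q ^ (b+1))⁻¹)
          ≤ q / (q + 5) * ((1 + 8/7 * (q ^ b)⁻¹) * (1 - (q ^ (b+1))⁻¹)) := by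
        gcongr q / (q + 5) * ?_
        set t := (q ^ b)⁻¹ with htd
        have ht0 : (0:ℝ) < t := by positivity
        have hqt : (q ^ (b+1))⁻¹ = t / q := by
          rw [htd, pow_succ, mul_inv, div_eq_mul_inv]
        rw [hqt]
        set u := t / q with hud
        have hu0 : (0:ℝ) ≤ u := by positivity
        have hu : t = u * q := by
          rw [hud]; field_simp
        have h2 : (0:ℝ) ≤ (8:ℝ)/7 * (q - 1) - 1 - 8/7 * t := by linarith
        nlinarith [mul_nonneg hu0 h2, hu]
      calc q / (q + 5) * (1 + 8/7 * (q ^ (b+1))⁻¹)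
          ≤ q / (q + 5) * ((1 + 8/7 * (q ^ b)⁻¹) * (1 - (q ^ (b+1))⁻¹)) := key
        _ = q / (q + 5) * (1 + 8/7 * (q ^ b)⁻¹) * (1 - (q ^ (b+1))⁻¹) := by ring
        _ ≤ (∏ j ∈ Finset.range b, (1 - (q ^ (j + 1))⁻¹)) * (1 - (q ^ (b+1))⁻¹) := by
            gcongr

lemma prodS_ge (q : ℝ) (hq : 2 ≤ q) (b : ℕ) :
    q / (q + 5) ≤ ∏ j ∈ Finset.range b, (1 - (q ^ (j + 1))⁻¹) := by
  have hq0 : (0:ℝ) < q := by linarith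
  have h5 : (0:ℝ) < q + 5 := by linarith
  have h1 : q⁻¹ ≤ 1/2 := by
    have := inv_anti₀ (show (0:ℝ) < 2 by norm_num) hq
    simpa using this
  have h2 : (q ^ 2)⁻¹ ≤ 1/4 := by
    have h4 : (4:ℝ) ≤ q ^ 2 := by nlinarith
    have := inv_anti₀ (show (0:ℝ) < 4 by norm_num) h4
    simpa using this
  have e1 : q * q⁻¹ = 1 := mul_inv_cancel₀ (ne_of_gt hq0)
  have e2 : q ^ 2 * (q ^ 2)⁻¹ = 1 := mul_inv_cancel₀ (by positivity)
  have hi1 : (0:ℝ) < q⁻¹ := by positivity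
  have hi2 : (0:ℝ) < (q ^ 2)⁻¹ := by positivity
  match b, (by omega : b = 0 ∨ b = 1 ∨ b = 2 ∨ 3 ≤ b) with
  | 0, _ =>
      simp only [Finset.range_zero, Finset.prod_empty]
      rw [div_le_one h5]; linarith
  | 1, _ =>
      rw [Finset.prod_range_one]
      rw [div_le_iff₀ h5]
      norm_num
      nlinarith
  | 2, _ =>
      rw [Finset.prod_range_succ, Finset.prod_range_one]
      rw [div_le_iff₀ h5]
      norm_num
      nlinarith [mul_le_mul h1 h2 (le_of_lt hi2) (by norm_num : (0:ℝ) ≤ 1/2)]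
  | (n+3), h =>
      calc q / (q+5) ≤ q / (q+5) * (1 + (8/7) * (q ^ (n+3))⁻¹) := by
            nlinarith [inv_pos.mpr (pow_pos hq0 (n+3)), div_pos hq0 h5]
        _ ≤ _ := aux_strong q hq (n+3) (by omega)

theorem gauss_binom_bounds_q_ge_two (q : ℝ) (a b : ℕ) (hq : 2 ≤ q) (hab : b ≤ a) :
    q ^ (b * (a - b)) ≤ gaussBinom q a b ∧
      gaussBinom q a b ≤ (1 + 5 / q) * q ^ (b * (a - b)) := by
  have hq0 : (0:ℝ) < q := by linarith
  have hq1 : (1:ℝ) ≤ q := by linarith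
  have hden : ∀ i ∈ Finset.range b, (2:ℝ) ≤ q ^ (b - i) := by
    intro i hi
    simp only [Finset.mem_range] at hi
    calc (2:ℝ) = 2 ^ 1 := by norm_num
    _ ≤ q ^ 1 := by simpa using hq
    _ ≤ q ^ (b - i) := pow_le_pow_right₀ hq1 (by omega)
  constructor
  · rw [gaussBinom]
    have h := Finset.prod_le_prod (s := Finset.range b)
      (f := fun _ => q ^ (a - b)) (g := fun i => (q ^ (a - i) - 1) / (q ^ (b - i) - 1))
      (fun i _ => by positivity)
      (fun i hi => by
        show q ^ (a - b) ≤ (q ^ (a - i) - 1) / (q ^ (b - i) - 1)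
        have h2 := hden i hi
        simp only [Finset.mem_range] at hi
        rw [le_div_iff₀ (by linarith)]
        have hsplit : q ^ (a - b) * q ^ (b - i) = q ^ (a - i) := by
          rw [← pow_add]; congr 1; omega
        have h1 : (1:ℝ) ≤ q ^ (a - b) := one_le_pow₀ hq1
        nlinarith)
    calc q ^ (b * (a - b)) = ∏ _i ∈ Finset.range b, q ^ (a - b) := by
          rw [Finset.prod_const, Finset.card_range, ← pow_mul, mul_comm]
      _ ≤ _ := by simpa using h
  · rw [gaussBinom]
    have hwpos : ∀ i ∈ Finset.range b, (0:ℝ) < 1 - (q ^ (b - i))⁻¹ := by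
      intro i hi
      have h2 := hden i hi
      have : (q ^ (b - i))⁻¹ ≤ 1/2 := by
        have := inv_anti₀ (show (0:ℝ) < 2 by norm_num) h2
        simpa using this
      linarith
    have step := Finset.prod_le_prod (s := Finset.range b)
      (f := fun i => (q ^ (a - i) - 1) / (q ^ (b - i) - 1))
      (g := fun i => q ^ (a - b) * (1 - (q ^ (b - i))⁻¹)⁻¹)
      (fun i hi => by
        have h2 := hden i hi
        have hn : (0:ℝ) ≤ q ^ (a - i) - 1 := by
          have : (1:ℝ) ≤ q ^ (a - i) := one_le_pow₀ hq1
          linarith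
        have hd : (0:ℝ) < q ^ (b - i) - 1 := by linarith
        positivity)
      (fun i hi => by
        show (q ^ (a - i) - 1) / (q ^ (b - i) - 1) ≤ q ^ (a - b) * (1 - (q ^ (b - i))⁻¹)⁻¹
        have h2 := hden i hi
        simp only [Finset.mem_range] at hi
        have hbi : (0:ℝ) < q ^ (b - i) := by linarith
        have hd : (0:ℝ) < q ^ (b - i) - 1 := by linarith
        have hsplit : q ^ (a - b) * q ^ (b - i) = q ^ (a - i) := by
          rw [← pow_add]; congr 1; omega
        have key : q ^ (a - b) * (1 - (q ^ (b - i))⁻¹)⁻¹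
            = q ^ (a - i) / (q ^ (b - i) - 1) := by
          rw [← hsplit]
          field_simp
        rw [key]
        gcongr
        linarith)
    have hrefl : (∏ i ∈ Finset.range b, (1 - (q ^ (b - i))⁻¹))
        = ∏ j ∈ Finset.range b, (1 - (q ^ (j + 1))⁻¹) := by
      rw [← Finset.prod_range_reflect (fun j => 1 - (q ^ (j + 1))⁻¹) b]
      apply Finset.prod_congr rfl
      intro j hj
      simp only [Finset.mem_range] at hj
      have e : b - 1 - j + 1 = b - j := by omega
      rw [e]
    have hSpos : (0:ℝ) < ∏ i ∈ Finset.range b, (1 - (q ^ (b - i))⁻¹) :=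
      Finset.prod_pos hwpos
    have hS : q / (q + 5) ≤ ∏ i ∈ Finset.range b, (1 - (q ^ (b - i))⁻¹) := by
      rw [hrefl]; exact prodS_ge q hq b
    calc (∏ i ∈ Finset.range b, (q ^ (a - i) - 1) / (q ^ (b - i) - 1))
        ≤ ∏ i ∈ Finset.range b, q ^ (a - b) * (1 - (q ^ (b - i))⁻¹)⁻¹ := step
      _ = q ^ (b * (a - b)) * (∏ i ∈ Finset.range b, (1 - (q ^ (b - i))⁻¹))⁻¹ := by
          rw [Finset.prod_mul_distrib, Finset.prod_const, Finset.card_range, ← pow_mul,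
            mul_comm (a - b) b, Finset.prod_inv_distrib]
      _ ≤ q ^ (b * (a - b)) * (q / (q + 5))⁻¹ := by
          have h := inv_anti₀ (div_pos hq0 (by linarith : (0:ℝ) < q + 5)) hS
          have hp : (0:ℝ) ≤ q ^ (b * (a - b)) := by positivity
          exact mul_le_mul_of_nonneg_left h hp
      _ = (1 + 5 / q) * q ^ (b * (a - b)) := by
          rw [inv_div]
          field_simp
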